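/- Let P be a k-plex containing a designated vertex v_i with |P| ≥ q. Suppose u_1, u_2 ∈ P are distinct vertices both adjacent to v_i but non-adjacent to each other. Let C = (N_G(v_i) ∩ P) \ {u_1, u_2}. Then |N_C(u_1) ∩ N_C(u_2)| ≥ q - k - 2·max{k-1, 1}. -/

import Mathlib

open Finset

variable {V : Type*} [Fintype V] [DecidableEq V]

/-- A set `P` of vertices is a `k`-plex in `G` if every `u ∈ P` has degree at least
`|P| - k` in the induced subgraph `G[P]`, i.e. `|P| ≤ d_P(u) + k`. -/
def SimpleGraph.IsKPlex (G : SimpleGraph V) [DecidableRel G.Adj] (k : ℕ) (P : Finset V) : Prop :=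
  ∀ u ∈ P, P.card ≤ (P.filter (fun x => G.Adj u x)).card + k

theorem pair_prune_neighbors_nonadjacent (G : SimpleGraph V) [DecidableRel G.Adj]
    (k q : ℕ) (hk : 1 ≤ k) (P : Finset V) (v_i : V) (hP : G.IsKPlex k P)
    (hvi : v_i ∈ P) (hq : q ≤ P.card) (u1 u2 : V) (h1 : u1 ∈ P) (h2 : u2 ∈ P)
    (hne : u1 ≠ u2) (ha1 : G.Adj u1 v_i) (ha2 : G.Adj u2 v_i)
    (h12 : ¬ G.Adj u1 u2) :
    (q : ℤ) - (k : ℤ) - 2 * max ((k : ℤ) - 1) 1 ≤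
      ((((G.neighborFinset v_i ∩ P) \ {u1, u2}).filter
          (fun x => G.Adj u1 x ∧ G.Adj u2 x)).card : ℤ) := by
  classical
  set C := (G.neighborFinset v_i ∩ P) \ {u1, u2} with hC
  -- bound on non-neighbors inside P
  have hnn : ∀ u ∈ P, (P.filter (fun x => ¬ G.Adj u x)).card ≤ k := by
    intro u hu
    have h := hP u hu
    have h' := Finset.card_filter_add_card_filter_not
      (s := P) (p := fun x => G.Adj u x)
    omega
  have hcard12 : ({u1, u2} : Finset V).card = 2 := by
    rw [card_insert_of_notMem (by simpa using hne), card_singleton]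
  -- k ≥ 2
  have hsub12 : ({u1, u2} : Finset V) ⊆ P.filter (fun x => ¬ G.Adj u1 x) := by
    intro x hx
    simp only [mem_insert, mem_singleton] at hx
    rcases hx with rfl | rfl
    · simp [mem_filter, h1]
    · simp [mem_filter, h2, h12]
  have hk2 : 2 ≤ k := by
    have h := card_le_card hsub12
    have h' := hnn u1 h1
    omega
  -- |C| ≥ |P| - k - 2
  have hCP : (G.neighborFinset v_i ∩ P) = P.filter (fun x => G.Adj v_i x) := by
    ext x
    simp [SimpleGraph.mem_neighborFinset, and_comm]
  have hvin : P.card ≤ (G.neighborFinset v_i ∩ P).card + k := by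
    rw [hCP]; exact hP v_i hvi
  have hCcard : P.card ≤ C.card + k + 2 := by
    have h := Finset.card_sdiff_add_card (s := G.neighborFinset v_i ∩ P) (t := {u1, u2})
    have hle : (G.neighborFinset v_i ∩ P).card
        ≤ ((G.neighborFinset v_i ∩ P) ∪ {u1, u2}).card :=
      Finset.card_le_card Finset.subset_union_left
    rw [← hC] at h
    omega
  -- non-neighbors of w in C
  have hgen : ∀ w, w ∈ P → ¬ G.Adj w u1 → ¬ G.Adj w u2 →
      (C.filter (fun x => ¬ G.Adj w x)).card + 2 ≤ k := by
    intro w hw hna1 hna2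
    have hdisj : Disjoint (C.filter (fun x => ¬ G.Adj w x)) ({u1, u2} : Finset V) := by
      rw [Finset.disjoint_left]
      intro x hx hx2
      have hxC : x ∈ C := mem_of_mem_filter _ hx
      rw [hC, mem_sdiff] at hxC
      exact hxC.2 hx2
    have hsub : (C.filter (fun x => ¬ G.Adj w x)) ∪ {u1, u2}
        ⊆ P.filter (fun x => ¬ G.Adj w x) := by
      intro x hx
      rcases mem_union.mp hx with hx | hx
      · have hxC : x ∈ C := mem_of_mem_filter _ hx
        rw [hC, mem_sdiff, mem_inter] at hxC
        simp only [mem_filter] at hx ⊢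
        exact ⟨hxC.1.2, hx.2⟩
      · simp only [mem_insert, mem_singleton] at hx
        rcases hx with rfl | rfl
        · simp [mem_filter, h1, hna1]
        · simp [mem_filter, h2, hna2]
    have h := card_le_card hsub
    rw [card_union_of_disjoint hdisj, hcard12] at h
    have h' := hnn w hw
    omega
  have hX1 := hgen u1 h1 (G.irrefl) h12
  have hX2 := hgen u2 h2 (fun h => h12 h.symm) (G.irrefl)
  -- cover C
  set F := C.filter (fun x => G.Adj u1 x ∧ G.Adj u2 x) with hF
  have hcover : C ⊆ F ∪ (C.filter (fun x => ¬ G.Adj u1 x)) ∪ (C.filter (fun x => ¬ G.Adj u2 x)) := by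
    intro x hx
    by_cases hA : G.Adj u1 x
    · by_cases hB : G.Adj u2 x
      · exact mem_union_left _ (mem_union_left _ (mem_filter.mpr ⟨hx, hA, hB⟩))
      · exact mem_union_right _ (mem_filter.mpr ⟨hx, hB⟩)
    · exact mem_union_left _ (mem_union_right _ (mem_filter.mpr ⟨hx, hA⟩))
  have hcount : C.card ≤ F.card + (C.filter (fun x => ¬ G.Adj u1 x)).card
      + (C.filter (fun x => ¬ G.Adj u2 x)).card := by
    calc C.card ≤ _ := card_le_card hcover
      _ ≤ _ := (card_union_le _ _).trans (add_le_add_left (card_union_le _ _) _)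
  have hmax : max ((k : ℤ) - 1) 1 = (k : ℤ) - 1 := by
    apply max_eq_left
    have : (2 : ℤ) ≤ (k : ℤ) := by exact_mod_cast hk2
    omega
  rw [hmax]
  omega
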